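/- For integers k ≤ n ≤ −1, define the extended Stirling numbers (inverse Laurent series region) s(n,k) := h_{n−k}(−1, −2, …, n) (the complete homogeneous symmetric function of degree n−k in the −n integers −1, −2, …, n) and S(n,k) := (−1)^{n−k} · e_{n−k}(−1, −2, …, k+1) (the elementary symmetric function of degree n−k in the −k−1 integers −1, −2, …, k+1), and set s(n,k) = S(n,k) = 0 when k > n. Then for all integers k ≤ n ≤ −1: s(n, k) = s(n−1, k−1) − (n−1)·s(n−1, k) and S(n, k) = S(n−1, k−1) + k·S(n−1, k). -/

import Mathlib

/-- `h_n(B)`: the complete homogeneous symmetric function of degree `n` in the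
elements of the multiset `B`, defined as the coefficient of `t^n` in
`∏_{b ∈ B} (1 + b t + b² t² + ⋯) = ∏_{b ∈ B} 1/(1 - b t)`. -/
noncomputable def hsymmM {R : Type*} [CommRing R] (B : Multiset R) (n : ℕ) : R :=
  PowerSeries.coeff n ((B.map fun b => PowerSeries.mk fun k => b ^ k).prod)

/-- `e_k(A)`: the elementary symmetric function of degree `k` in the elements of
the multiset `A`. -/
def esymmM {R : Type*} [CommRing R] (A : Multiset R) (k : ℕ) : R :=
  ((A.powersetCard k).map Multiset.prod).sum

/-- The complementary symmetric function `comp_n(A;B) = ∑_{j=0}^n (-1)^j e_j(A) h_{n-j}(B)`. -/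
noncomputable def compM {R : Type*} [CommRing R] (A B : Multiset R) (n : ℕ) : R :=
  ∑ j ∈ Finset.range (n + 1), (-1 : R) ^ j * esymmM A j * hsymmM B (n - j)


/-- Extended Stirling numbers of the first kind, inverse Laurent series region:
for `k ≤ n ≤ -1`, `s(n,k) = h_{n-k}(-1, -2, …, n)` (in the `-n` integers `-1, …, n`),
and `s(n,k) = 0` for `k > n`. -/
noncomputable def sR3 (n k : ℤ) : ℤ :=
  if k ≤ n then
    hsymmM ((Multiset.range (-n).toNat).map fun j => -((j : ℤ) + 1)) (n - k).toNat
  else 0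

/-- Extended Stirling numbers of the second kind, inverse Laurent series region:
for `k ≤ n ≤ -1`, `S(n,k) = (-1)^{n-k} e_{n-k}(-1, -2, …, k+1)` (in the `-k-1` integers
`-1, …, k+1`), and `S(n,k) = 0` for `k > n`. -/
def SR3 (n k : ℤ) : ℤ :=
  if k ≤ n then
    (-1) ^ (n - k).toNat *
      esymmM ((Multiset.range (-k - 1).toNat).map fun j => -((j : ℤ) + 1)) (n - k).toNat
  else 0

lemma esymmM_zero {R : Type*} [CommRing R] (A : Multiset R) : esymmM A 0 = 1 := by
  simp [esymmM]

lemma esymmM_cons {R : Type*} [CommRing R] (A : Multiset R) (x : R) (m : ℕ) :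
    esymmM (x ::ₘ A) (m + 1) = esymmM A (m + 1) + x * esymmM A m := by
  simp [esymmM, Multiset.powersetCard_cons, Multiset.map_map, Function.comp_def,
    Multiset.sum_map_mul_left]

lemma hsymmM_zero {R : Type*} [CommRing R] (B : Multiset R) : hsymmM B 0 = 1 := by
  simp only [hsymmM, PowerSeries.coeff_zero_eq_constantCoeff, map_multiset_prod,
    Multiset.map_map]
  convert Multiset.prod_map_one
  simp [PowerSeries.constantCoeff_mk]

lemma mk_geom {R : Type*} [CommRing R] (x : R) :
    PowerSeries.mk (fun k => x ^ k) =
      1 + PowerSeries.X * (PowerSeries.C x * PowerSeries.mk (fun k => x ^ k)) := by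
  ext n
  cases n with
  | zero => simp
  | succ m => simp [pow_succ, mul_comm]

lemma hsymmM_cons {R : Type*} [CommRing R] (B : Multiset R) (x : R) (m : ℕ) :
    hsymmM (x ::ₘ B) (m + 1) = hsymmM B (m + 1) + x * hsymmM (x ::ₘ B) m := by
  simp only [hsymmM, Multiset.map_cons, Multiset.prod_cons]
  conv_lhs => rw [mk_geom x, add_mul, one_mul, mul_assoc, mul_assoc]
  rw [map_add, PowerSeries.coeff_succ_X_mul, PowerSeries.coeff_C_mul]

lemma range_map_succ (M : ℕ) : ((Multiset.range (M + 1)).map fun j => -((j : ℤ) + 1)) =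
    (-((M : ℤ) + 1)) ::ₘ ((Multiset.range M).map fun j => -((j : ℤ) + 1)) := by
  simp [Multiset.range_succ]

/-- The Stirling recursions in region 3: for `k ≤ n ≤ -1`,
`s(n,k) = s(n-1,k-1) - (n-1) s(n-1,k)` and `S(n,k) = S(n-1,k-1) + k S(n-1,k)`. -/
theorem stmt18 (n k : ℤ) (hk : k ≤ n) (hn : n ≤ -1) :
    sR3 n k = sR3 (n - 1) (k - 1) - (n - 1) * sR3 (n - 1) k ∧
    SR3 n k = SR3 (n - 1) (k - 1) + k * SR3 (n - 1) k := by
  constructor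
  · rcases eq_or_lt_of_le hk with h | h
    · subst h
      rw [sR3, sR3, sR3, if_pos le_rfl, if_pos (by omega : k - 1 ≤ k - 1),
        if_neg (by omega : ¬ k ≤ k - 1)]
      simp [hsymmM_zero]
    · have h1 : (n - k).toNat = (n - 1 - k).toNat + 1 := by omega
      have h2 : (n - 1 - (k - 1)).toNat = (n - 1 - k).toNat + 1 := by omega
      have h3 : (-(n - 1)).toNat = (-n).toNat + 1 := by omega
      rw [sR3, sR3, sR3, if_pos hk, if_pos (by omega : k - 1 ≤ n - 1),
        if_pos (by omega : k ≤ n - 1), h1, h2, h3, range_map_succ,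
        show -((((-n).toNat : ℕ) : ℤ) + 1) = n - 1 by omega, hsymmM_cons]
      ring
  · rcases eq_or_lt_of_le hk with h | h
    · subst h
      rw [SR3, SR3, SR3, if_pos le_rfl, if_pos (by omega : k - 1 ≤ k - 1),
        if_neg (by omega : ¬ k ≤ k - 1)]
      simp [esymmM_zero]
    · have h1 : (n - k).toNat = (n - 1 - k).toNat + 1 := by omega
      have h2 : (n - 1 - (k - 1)).toNat = (n - 1 - k).toNat + 1 := by omega
      have h3 : (-(k - 1) - 1).toNat = (-k - 1).toNat + 1 := by omega
      rw [SR3, SR3, SR3, if_pos hk, if_pos (by omega : k - 1 ≤ n - 1),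
        if_pos (by omega : k ≤ n - 1), h1, h2, h3, range_map_succ,
        show -((((-k - 1).toNat : ℕ) : ℤ) + 1) = k by omega, esymmM_cons]
      ring
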